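/- The Jacobi theta identity holds: Θ₀₁(z)⁴ + Θ₁₀(z)⁴ = Θ₀₀(z)⁴ for all z in the upper half plane. -/

import Mathlib

set_option maxHeartbeats 1000000

open Complex

namespace JacobiIdentityAux

open Real

lemma sum_f0 {z : ℂ} (hz : 0 < z.im) :
    Summable fun n : ℤ => cexp (π * I * (n : ℂ) ^ 2 * z) := by
  refine ((summable_jacobiTheta₂_term_iff 0 z).mpr hz).congr fun n => ?_
  rw [jacobiTheta₂_term]; congr 1; ring

lemma sum_f1 {z : ℂ} (hz : 0 < z.im) :
    Summable fun n : ℤ => (-1 : ℂ) ^ n * cexp (π * I * (n : ℂ) ^ 2 * z) := by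
  refine ((summable_jacobiTheta₂_term_iff (1/2) z).mpr hz).congr fun n => ?_
  rw [jacobiTheta₂_term, ← Complex.exp_pi_mul_I, ← Complex.exp_int_mul, ← Complex.exp_add]
  congr 1; ring

lemma sum_f2 {z : ℂ} (hz : 0 < z.im) :
    Summable fun n : ℤ => cexp (π * I * ((n : ℂ) + 1 / 2) ^ 2 * z) := by
  refine (((summable_jacobiTheta₂_term_iff (z/2) z).mpr hz).mul_left
    (cexp (π * I * z / 4))).congr fun n => ?_
  rw [jacobiTheta₂_term, ← Complex.exp_add]
  congr 1; ring

lemma neg_one_zpow_mul (m n : ℤ) : (-1 : ℂ) ^ m * (-1 : ℂ) ^ n = (-1 : ℂ) ^ (m + n) :=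
  (zpow_add₀ (by norm_num) m n).symm

lemma lemB {z : ℂ} (hz : 0 < z.im) (hz2 : 0 < (2*z).im) :
    (∑' n : ℤ, cexp (π * I * (n : ℂ) ^ 2 * z)) ^ 2
      - (∑' n : ℤ, (-1:ℂ) ^ n * cexp (π * I * (n : ℂ) ^ 2 * z)) ^ 2
    = 2 * (∑' n : ℤ, cexp (π * I * ((n : ℂ) + 1 / 2) ^ 2 * (2*z))) ^ 2 := by
  have n0 : Summable fun n : ℤ => ‖cexp (π * I * (n : ℂ) ^ 2 * z)‖ :=
    summable_norm_iff.mpr (sum_f0 hz)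
  have n1 : Summable fun n : ℤ => ‖(-1:ℂ) ^ n * cexp (π * I * (n : ℂ) ^ 2 * z)‖ :=
    summable_norm_iff.mpr (sum_f1 hz)
  have n2' : Summable fun n : ℤ => ‖cexp (π * I * ((n : ℂ) + 1 / 2) ^ 2 * (2*z))‖ :=
    summable_norm_iff.mpr (sum_f2 hz2)
  rw [sq, sq, sq, tsum_mul_tsum_of_summable_norm n0 n0, tsum_mul_tsum_of_summable_norm n1 n1,
    tsum_mul_tsum_of_summable_norm n2' n2',
    ← Summable.tsum_sub (α := ℂ) (summable_mul_of_summable_norm n0 n0) (summable_mul_of_summable_norm n1 n1),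
    ← tsum_mul_left]
  rw [← Function.Injective.tsum_eq (g := fun c : ℤ × ℤ => (c.1 + c.2 + 1, c.1 - c.2))
    (f := fun p : ℤ × ℤ => cexp (π * I * (p.1 : ℂ) ^ 2 * z) * cexp (π * I * (p.2 : ℂ) ^ 2 * z)
      - (-1:ℂ) ^ p.1 * cexp (π * I * (p.1 : ℂ) ^ 2 * z)
        * ((-1:ℂ) ^ p.2 * cexp (π * I * (p.2 : ℂ) ^ 2 * z)))
    (fun c d h => by
      simp only [Prod.mk.injEq] at h
      exact Prod.ext (by omega) (by omega))
    (fun p hp => by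
      rcases Int.even_or_odd (p.1 + p.2) with he | ho
      · exfalso
        apply hp
        have e2 : (-1:ℂ) ^ p.1 * (-1:ℂ) ^ p.2 = 1 := by
          rw [neg_one_zpow_mul]; exact Even.neg_one_zpow he
        simp only
        rw [mul_mul_mul_comm, e2]
        ring
      · obtain ⟨k, hk⟩ := ho
        exact ⟨(k, p.1 - k - 1), Prod.ext (by simp <;> omega) (by simp <;> omega)⟩)]
  refine tsum_congr fun c => ?_
  obtain ⟨a, b⟩ := c
  simp only
  have e1 : cexp (π * I * ((a + b + 1 : ℤ) : ℂ) ^ 2 * z)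
        * cexp (π * I * ((a - b : ℤ) : ℂ) ^ 2 * z)
      = cexp (π * I * ((a : ℂ) + 1/2) ^ 2 * (2*z)) * cexp (π * I * ((b : ℂ) + 1/2) ^ 2 * (2*z)) := by
    rw [← Complex.exp_add, ← Complex.exp_add]; congr 1; push_cast; ring
  have e2 : (-1:ℂ) ^ (a + b + 1) * (-1:ℂ) ^ (a - b) = -1 := by
    rw [neg_one_zpow_mul]; exact Odd.neg_one_zpow ⟨a, by ring⟩
  rw [mul_mul_mul_comm, e2, e1]
  ring

noncomputable def Hfun (z : ℂ) : ℤ × ℤ → ℂ := fun p =>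
  cexp (π * I * ((p.1 : ℂ) + 1 / 2) ^ 2 * z) * cexp (π * I * ((p.2 : ℂ) + 1 / 2) ^ 2 * z)

def Spar : Set (ℤ × ℤ) := {p | Even (p.1 - p.2)}

lemma lemC {z : ℂ} (hz : 0 < z.im) (hz2 : 0 < (2*z).im) :
    (∑' n : ℤ, cexp (π * I * ((n : ℂ) + 1 / 2) ^ 2 * z)) ^ 2
    = 2 * (∑' n : ℤ, cexp (π * I * (n : ℂ) ^ 2 * (2*z)))
        * (∑' n : ℤ, cexp (π * I * ((n : ℂ) + 1 / 2) ^ 2 * (2*z))) := by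
  have n2 : Summable fun n : ℤ => ‖cexp (π * I * ((n : ℂ) + 1 / 2) ^ 2 * z)‖ :=
    summable_norm_iff.mpr (sum_f2 hz)
  have n0' : Summable fun n : ℤ => ‖cexp (π * I * (n : ℂ) ^ 2 * (2*z))‖ :=
    summable_norm_iff.mpr (sum_f0 hz2)
  have n2' : Summable fun n : ℤ => ‖cexp (π * I * ((n : ℂ) + 1 / 2) ^ 2 * (2*z))‖ :=
    summable_norm_iff.mpr (sum_f2 hz2)
  have hsumH : Summable (Hfun z) := by
    refine (summable_mul_of_summable_norm n2 n2).congr fun p => rfl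
  have key : (∑' n : ℤ, cexp (π * I * ((n : ℂ) + 1 / 2) ^ 2 * z)) ^ 2 = ∑' p : ℤ × ℤ, (Hfun z) p := by
    rw [sq, tsum_mul_tsum_of_summable_norm n2 n2]; rfl
  rw [key, ← Set.indicator_self_add_compl Spar (Hfun z)]
  simp only [Pi.add_apply]
  rw [Summable.tsum_add (hsumH.indicator Spar) (hsumH.indicator Sparᶜ)]
  have part1 : ∑' p : ℤ × ℤ, Spar.indicator (Hfun z) p
      = (∑' n : ℤ, cexp (π * I * (n : ℂ) ^ 2 * (2*z)))
        * (∑' n : ℤ, cexp (π * I * ((n : ℂ) + 1 / 2) ^ 2 * (2*z))) := by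
    rw [tsum_mul_tsum_of_summable_norm n0' n2',
      ← Function.Injective.tsum_eq (g := fun c : ℤ × ℤ => (c.1 + c.2, c.2 - c.1))
        (f := Spar.indicator (Hfun z))
        (fun c d h => by
          simp only [Prod.mk.injEq] at h
          exact Prod.ext (by omega) (by omega))
        (fun p hp => by
          have hmem : p ∈ Spar := by
            by_contra hns
            exact hp (Set.indicator_of_notMem hns (Hfun z))
          obtain ⟨k, hk⟩ := hmem
          exact ⟨(k, p.1 - k), Prod.ext (by simp <;> omega) (by simp <;> omega)⟩)]
    refine tsum_congr fun c => ?_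
    obtain ⟨a, b⟩ := c
    have hmem : ((a + b : ℤ), (b - a : ℤ)) ∈ Spar := ⟨a, by simp; ring⟩
    rw [Set.indicator_of_mem hmem, Hfun]
    simp only
    rw [← Complex.exp_add, ← Complex.exp_add]
    congr 1; push_cast; ring
  have part2 : ∑' p : ℤ × ℤ, Sparᶜ.indicator (Hfun z) p
      = (∑' n : ℤ, cexp (π * I * ((n : ℂ) + 1 / 2) ^ 2 * (2*z)))
        * (∑' n : ℤ, cexp (π * I * (n : ℂ) ^ 2 * (2*z))) := by
    rw [tsum_mul_tsum_of_summable_norm n2' n0',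
      ← Function.Injective.tsum_eq (g := fun c : ℤ × ℤ => (c.1 + c.2, c.2 - c.1 - 1))
        (f := Sparᶜ.indicator (Hfun z))
        (fun c d h => by
          simp only [Prod.mk.injEq] at h
          exact Prod.ext (by omega) (by omega))
        (fun p hp => by
          have hmem : p ∈ Sparᶜ := by
            by_contra hns
            rw [Set.notMem_compl_iff] at hns
            exact hp (Set.indicator_of_notMem (by simpa using hns) (Hfun z))
          have hodd : Odd (p.1 - p.2) := Int.not_even_iff_odd.mp hmem
          obtain ⟨k, hk⟩ := hodd
          exact ⟨(k, p.1 - k), Prod.ext (by simp <;> omega) (by simp <;> omega)⟩)]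
    refine tsum_congr fun c => ?_
    obtain ⟨a, b⟩ := c
    have hmem : ((a + b : ℤ), (b - a - 1 : ℤ)) ∈ Sparᶜ := by
      simp only [Spar, Set.mem_compl_iff, Set.mem_setOf_eq]
      rw [Int.not_even_iff_odd]
      exact ⟨a, by ring⟩
    rw [Set.indicator_of_mem hmem, Hfun]
    simp only
    rw [← Complex.exp_add, ← Complex.exp_add]
    congr 1; push_cast; ring
  rw [part1, part2]
  ring



lemma lemA {z : ℂ} (hz : 0 < z.im) (hz2 : 0 < (2*z).im) :
    (∑' n : ℤ, cexp (π * I * (n : ℂ) ^ 2 * z)) ^ 2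
      + (∑' n : ℤ, (-1:ℂ) ^ n * cexp (π * I * (n : ℂ) ^ 2 * z)) ^ 2
    = 2 * (∑' n : ℤ, cexp (π * I * (n : ℂ) ^ 2 * (2*z))) ^ 2 := by
  have n0 : Summable fun n : ℤ => ‖cexp (π * I * (n : ℂ) ^ 2 * z)‖ :=
    summable_norm_iff.mpr (sum_f0 hz)
  have n1 : Summable fun n : ℤ => ‖(-1:ℂ) ^ n * cexp (π * I * (n : ℂ) ^ 2 * z)‖ :=
    summable_norm_iff.mpr (sum_f1 hz)
  have n0' : Summable fun n : ℤ => ‖cexp (π * I * (n : ℂ) ^ 2 * (2*z))‖ :=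
    summable_norm_iff.mpr (sum_f0 hz2)
  rw [sq, sq, sq, tsum_mul_tsum_of_summable_norm n0 n0, tsum_mul_tsum_of_summable_norm n1 n1,
    tsum_mul_tsum_of_summable_norm n0' n0',
    ← Summable.tsum_add (summable_mul_of_summable_norm n0 n0) (summable_mul_of_summable_norm n1 n1),
    ← tsum_mul_left]
  rw [← Function.Injective.tsum_eq (g := fun c : ℤ × ℤ => (c.1 + c.2, c.1 - c.2))
    (f := fun p : ℤ × ℤ => cexp (π * I * (p.1 : ℂ) ^ 2 * z) * cexp (π * I * (p.2 : ℂ) ^ 2 * z)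
      + (-1:ℂ) ^ p.1 * cexp (π * I * (p.1 : ℂ) ^ 2 * z)
        * ((-1:ℂ) ^ p.2 * cexp (π * I * (p.2 : ℂ) ^ 2 * z)))
    (fun c d h => by
      simp only [Prod.mk.injEq] at h
      exact Prod.ext (by omega) (by omega))
    (fun p hp => by
      rcases Int.even_or_odd (p.1 + p.2) with he | ho
      · obtain ⟨k, hk⟩ := he
        exact ⟨(k, p.1 - k), Prod.ext (by simp) (by simp; omega)⟩
      · exfalso
        apply hp
        have e2 : (-1:ℂ) ^ p.1 * (-1:ℂ) ^ p.2 = -1 := by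
          rw [neg_one_zpow_mul]; exact Odd.neg_one_zpow ho
        simp only
        rw [mul_mul_mul_comm, e2]
        ring)]
  refine tsum_congr fun c => ?_
  obtain ⟨a, b⟩ := c
  simp only
  have e1 : cexp (π * I * ((a + b : ℤ) : ℂ) ^ 2 * z) * cexp (π * I * ((a - b : ℤ) : ℂ) ^ 2 * z)
      = cexp (π * I * (a : ℂ) ^ 2 * (2*z)) * cexp (π * I * (b : ℂ) ^ 2 * (2*z)) := by
    rw [← Complex.exp_add, ← Complex.exp_add]; congr 1; push_cast; ring
  have e2 : (-1:ℂ) ^ (a + b) * (-1:ℂ) ^ (a - b) = 1 := by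
    rw [neg_one_zpow_mul]; exact Even.neg_one_zpow ⟨a, by ring⟩
  rw [mul_mul_mul_comm, e2, one_mul, e1]
  ring


lemma final_alg {A0 A1 A2 X Y : ℂ} (hA : A0^2 + A1^2 = 2*X^2)
    (hB : A0^2 - A1^2 = 2*Y^2) (hC : A2^2 = 2*X*Y) : A1^4 + A2^4 = A0^4 := by
  linear_combination (-(A0^2 - A1^2)) * hA + (-2*X^2) * hB + (A2^2 + 2*X*Y) * hC

end JacobiIdentityAux

/-- Jacobi's identity `Θ₀₁(z)⁴ + Θ₁₀(z)⁴ = Θ₀₀(z)⁴` on the upper half plane. -/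
theorem stmt_1 (z : ℂ) (hz : 0 < z.im) :
    (∑' n : ℤ, (-1 : ℂ) ^ n * Complex.exp (Real.pi * Complex.I * (n : ℂ) ^ 2 * z)) ^ 4 +
      (∑' n : ℤ, Complex.exp (Real.pi * Complex.I * ((n : ℂ) + 1 / 2) ^ 2 * z)) ^ 4 =
    (∑' n : ℤ, Complex.exp (Real.pi * Complex.I * (n : ℂ) ^ 2 * z)) ^ 4 := by
  have hz2 : 0 < (2 * z).im := by
    rw [Complex.mul_im]
    simpa using by linarith
  have hA := JacobiIdentityAux.lemA hz hz2
  have hB := JacobiIdentityAux.lemB hz hz2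
  have hC := JacobiIdentityAux.lemC hz hz2
  exact JacobiIdentityAux.final_alg hA hB hC
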